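/- There exist constants C₁, C₂ > 0 and N ≥ 1 such that for all n ≥ N (in particular λ_n > λ), C₁ n^{−3/2} ≤ | J_ν( √(λ_n − λ)/κ ) | ≤ C₂ n^{−3/2}. -/

import Mathlib

open MeasureTheory Real Set

/-- The Bessel function of the first kind of order `ν ≥ 0`, defined by its power series
`J_ν(x) = ∑_{m≥0} (-1)^m / (m! Γ(m+ν+1)) (x/2)^(2m+ν)`. -/
noncomputable def besselJ (ν : ℝ) (x : ℝ) : ℝ :=
  ∑' m : ℕ, ((-1 : ℝ) ^ m / ((m.factorial : ℝ) * Real.Gamma ((m : ℝ) + ν + 1))) *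
    (x / 2) ^ (2 * (m : ℝ) + ν)

namespace Stmt11Aux

/-- coefficient of the auxiliary entire function -/
noncomputable def a (ν : ℝ) (m : ℕ) : ℝ :=
  (-1 : ℝ) ^ m / ((m.factorial : ℝ) * Real.Gamma ((m : ℝ) + ν + 1))

noncomputable def G (ν t : ℝ) : ℝ := ∑' m : ℕ, a ν m * t ^ m
noncomputable def G1 (ν t : ℝ) : ℝ := ∑' m : ℕ, (((m : ℝ) + 1) * a ν (m + 1)) * t ^ m
noncomputable def G2 (ν t : ℝ) : ℝ :=
  ∑' m : ℕ, ((((m : ℝ) + 1) * ((m : ℝ) + 2)) * a ν (m + 2)) * t ^ m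

lemma gamma_ge (ν : ℝ) (hν : 0 < ν) : ∀ m : ℕ,
    (m.factorial : ℝ) * Real.Gamma (ν + 1) ≤ Real.Gamma ((m : ℝ) + ν + 1) := by
  intro m
  induction m with
  | zero => simp
  | succ k ih =>
    have h1 : ((k : ℝ) + ν + 1) > 0 := by positivity
    have h2 : ((k + 1 : ℕ) : ℝ) + ν + 1 = ((k : ℝ) + ν + 1) + 1 := by push_cast; ring
    rw [h2, Real.Gamma_add_one (ne_of_gt h1)]
    have hk : ((k + 1 : ℕ).factorial : ℝ) = ((k : ℝ) + 1) * (k.factorial : ℝ) := by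
      rw [Nat.factorial_succ]; push_cast; ring
    rw [hk]
    have hg : (0 : ℝ) < Real.Gamma (ν + 1) := Real.Gamma_pos_of_pos (by positivity)
    calc ((k : ℝ) + 1) * (k.factorial : ℝ) * Real.Gamma (ν + 1)
        = ((k : ℝ) + 1) * ((k.factorial : ℝ) * Real.Gamma (ν + 1)) := by ring
      _ ≤ ((k : ℝ) + ν + 1) * Real.Gamma ((k : ℝ) + ν + 1) := by
          apply mul_le_mul (by linarith) ih (by positivity) (by positivity)

lemma abs_a_le (ν : ℝ) (hν : 0 < ν) (m : ℕ) :
    |a ν m| ≤ (Real.Gamma (ν + 1))⁻¹ / ((m.factorial : ℝ) * m.factorial) := by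
  have hg : (0 : ℝ) < Real.Gamma (ν + 1) := Real.Gamma_pos_of_pos (by positivity)
  have hG : (0 : ℝ) < Real.Gamma ((m : ℝ) + ν + 1) := Real.Gamma_pos_of_pos (by positivity)
  have hf : (0 : ℝ) < (m.factorial : ℝ) := by positivity
  have : |a ν m| = ((m.factorial : ℝ) * Real.Gamma ((m : ℝ) + ν + 1))⁻¹ := by
    rw [a, abs_div, abs_pow, abs_neg, abs_one, one_pow, abs_of_pos (by positivity), one_div]
  rw [this]
  rw [div_eq_mul_inv, ← mul_inv]
  apply inv_anti₀ (by positivity)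
  calc Real.Gamma (ν + 1) * ((m.factorial : ℝ) * m.factorial)
      = (m.factorial : ℝ) * ((m.factorial : ℝ) * Real.Gamma (ν + 1)) := by ring
    _ ≤ (m.factorial : ℝ) * Real.Gamma ((m : ℝ) + ν + 1) := by
        exact mul_le_mul_of_nonneg_left (gamma_ge ν hν m) (le_of_lt hf)

/-- master summability: coefficients bounded by `K / m!` give a summable series -/
lemma summable_coeff (c : ℕ → ℝ) (K : ℝ) (hc : ∀ m, |c m| ≤ K / m.factorial) (t : ℝ) :
    Summable (fun m : ℕ => c m * t ^ m) := by
  apply Summable.of_norm_bounded (g := fun m : ℕ => K * (|t| ^ m / m.factorial))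
    ((Real.summable_pow_div_factorial |t|).mul_left K)
  intro m
  rw [norm_mul, norm_pow, Real.norm_eq_abs, Real.norm_eq_abs]
  calc |c m| * |t| ^ m ≤ (K / m.factorial) * |t| ^ m := by
        exact mul_le_mul_of_nonneg_right (hc m) (by positivity)
    _ = K * (|t| ^ m / m.factorial) := by ring

/-- termwise differentiation -/
lemma hasDerivAt_series (c : ℕ → ℝ) (K : ℝ) (hc : ∀ m, |c m| ≤ K / m.factorial)
     (t : ℝ) :
    HasDerivAt (fun s => ∑' m : ℕ, c m * s ^ m)
      (∑' m : ℕ, (((m : ℝ) + 1) * c (m + 1)) * t ^ m) t := by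
  have hK : 0 ≤ K := le_trans (abs_nonneg _) (by simpa using hc 0)
  set R : ℝ := |t| + 1 with hR
  have hR1 : 1 ≤ R := by simp only [hR]; have := abs_nonneg t; linarith
  have htR : |t| ≤ R := by simp [hR]
  have hu : Summable (fun m : ℕ => K * ((2 * R) ^ m / m.factorial)) :=
    (Real.summable_pow_div_factorial (2 * R)).mul_left K
  have bnd : ∀ y : ℝ, |y| ≤ R → ∀ m : ℕ,
      ‖c m * ((m : ℝ) * y ^ (m - 1))‖ ≤ K * ((2 * R) ^ m / m.factorial) := by
    intro y hyR m
    have hy' : |y| ^ (m - 1) ≤ R ^ m := by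
      calc |y| ^ (m - 1) ≤ R ^ (m - 1) := pow_le_pow_left₀ (abs_nonneg _) hyR _
        _ ≤ R ^ m := pow_le_pow_right₀ hR1 (Nat.sub_le m 1)
    have hm2 : (m : ℝ) ≤ 2 ^ m := by exact_mod_cast (Nat.lt_two_pow_self (n := m)).le
    rw [Real.norm_eq_abs, abs_mul, abs_mul]
    calc |c m| * (|(m : ℝ)| * |y ^ (m - 1)|)
        ≤ (K / m.factorial) * ((2 : ℝ) ^ m * R ^ m) := by
          apply mul_le_mul (hc m) ?_ (by positivity) (by positivity)
          rw [abs_pow]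
          apply mul_le_mul (by rwa [abs_of_nonneg (by positivity)]) hy' (by positivity)
            (by positivity)
      _ = K * ((2 * R) ^ m / m.factorial) := by rw [mul_pow]; ring
  have key : HasDerivAt (fun s => ∑' m : ℕ, c m * s ^ m)
      (∑' m : ℕ, c m * ((m : ℝ) * t ^ (m - 1))) t := by
    apply hasDerivAt_tsum_of_isPreconnected hu (Metric.isOpen_ball (x := (0:ℝ)) (ε := R))
      (convex_ball (0:ℝ) R).isPreconnected
      (g' := fun m x => c m * ((m : ℝ) * x ^ (m - 1)))
      (fun m y _ => (hasDerivAt_pow m y).const_mul (c m))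
      ?_ ?_ (summable_coeff c K hc 0) ?_
    · intro m y hy
      have hyR : |y| ≤ R := by
        have := mem_ball_zero_iff.1 hy
        simpa [Real.norm_eq_abs] using le_of_lt this
      exact bnd y hyR m
    · exact Metric.mem_ball_self (by linarith)
    · rw [mem_ball_zero_iff, Real.norm_eq_abs]; simp [hR]
  convert key using 1
  have hsum : Summable (fun m : ℕ => c m * ((m : ℝ) * t ^ (m - 1))) :=
    Summable.of_norm_bounded hu (bnd t htR)
  rw [hsum.tsum_eq_zero_add]
  simp only [Nat.cast_zero, Nat.cast_add, Nat.cast_one, zero_mul, mul_zero, zero_add,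
    Nat.add_sub_cancel]
  exact tsum_congr fun m => by push_cast; ring

noncomputable def Kc (ν : ℝ) : ℝ := (Real.Gamma (ν + 1))⁻¹

lemma Kc_pos (ν : ℝ) (hν : 0 < ν) : 0 < Kc ν := by
  have := Real.Gamma_pos_of_pos (show (0:ℝ) < ν + 1 by positivity)
  exact inv_pos.2 this

lemma one_le_factorial (m : ℕ) : (1 : ℝ) ≤ (m.factorial : ℝ) := by
  exact_mod_cast Nat.one_le_iff_ne_zero.2 m.factorial_ne_zero

lemma bound0 (ν : ℝ) (hν : 0 < ν) (m : ℕ) : |a ν m| ≤ Kc ν / m.factorial := by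
  refine le_trans (abs_a_le ν hν m) ?_
  rw [Kc, div_le_div_iff₀ (by positivity) (by positivity)]
  have h1 := one_le_factorial m
  have h2 : (0:ℝ) ≤ (Real.Gamma (ν+1))⁻¹ * (m.factorial : ℝ) := by
    have := (Kc_pos ν hν); rw [Kc] at this; positivity
  nlinarith

lemma bound1 (ν : ℝ) (hν : 0 < ν) (m : ℕ) :
    |((m : ℝ) + 1) * a ν (m + 1)| ≤ Kc ν / m.factorial := by
  have hK := Kc_pos ν hν
  have h1 := one_le_factorial m
  have hfs : ((m+1 : ℕ).factorial : ℝ) = ((m:ℝ)+1) * (m.factorial : ℝ) := by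
    rw [Nat.factorial_succ]; push_cast; ring
  calc |((m : ℝ) + 1) * a ν (m + 1)| = ((m:ℝ)+1) * |a ν (m+1)| := by
        rw [abs_mul, abs_of_nonneg (by positivity)]
    _ ≤ ((m:ℝ)+1) * ((Real.Gamma (ν + 1))⁻¹ / (((m+1:ℕ).factorial : ℝ) * ((m+1:ℕ).factorial : ℝ))) := by
        exact mul_le_mul_of_nonneg_left (abs_a_le ν hν (m+1)) (by positivity)
    _ = Kc ν / ((m.factorial:ℝ) * (((m:ℝ)+1) * (m.factorial:ℝ))) := by
        rw [hfs, Kc]; field_simp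
    _ ≤ Kc ν / m.factorial := by
        apply div_le_div_of_nonneg_left (le_of_lt hK) (by positivity)
        nlinarith

lemma bound2 (ν : ℝ) (hν : 0 < ν) (m : ℕ) :
    |(((m : ℝ) + 1) * ((m : ℝ) + 2)) * a ν (m + 2)| ≤ Kc ν / m.factorial := by
  have hK := Kc_pos ν hν
  have h1 := one_le_factorial m
  have hfs : ((m+2 : ℕ).factorial : ℝ) = ((m:ℝ)+2) * (((m:ℝ)+1) * (m.factorial : ℝ)) := by
    show ((m+1+1 : ℕ).factorial : ℝ) = _
    rw [Nat.factorial_succ, Nat.factorial_succ]; push_cast; ring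
  calc |(((m : ℝ) + 1) * ((m : ℝ) + 2)) * a ν (m + 2)|
      = ((m:ℝ)+1) * ((m:ℝ)+2) * |a ν (m+2)| := by
        rw [abs_mul, abs_of_nonneg (by positivity)]
    _ ≤ ((m:ℝ)+1) * ((m:ℝ)+2) * ((Real.Gamma (ν + 1))⁻¹ / (((m+2:ℕ).factorial : ℝ) * ((m+2:ℕ).factorial : ℝ))) := by
        exact mul_le_mul_of_nonneg_left (abs_a_le ν hν (m+2)) (by positivity)
    _ = Kc ν / ((m.factorial:ℝ) * (((m:ℝ)+2) * (((m:ℝ)+1) * (m.factorial:ℝ)))) := by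
        rw [hfs, Kc]; field_simp
    _ ≤ Kc ν / m.factorial := by
        apply div_le_div_of_nonneg_left (le_of_lt hK) (by positivity)
        have hm : (0:ℝ) ≤ (m:ℝ) := Nat.cast_nonneg m
        have h2 : (1:ℝ) ≤ ((m:ℝ)+2) * (((m:ℝ)+1) * m.factorial) := by
          nlinarith [mul_le_mul_of_nonneg_left h1 (show (0:ℝ) ≤ (m:ℝ)+1 by linarith)]
        nlinarith [mul_le_mul_of_nonneg_left h2 (le_trans zero_le_one h1)]

lemma boundh (ν : ℝ) (hν : 0 < ν) (m : ℕ) :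
    |((m : ℝ) * ((m : ℝ) + 1)) * a ν (m + 1)| ≤ Kc ν / m.factorial := by
  have hK := Kc_pos ν hν
  have h1 := one_le_factorial m
  have hm : (0:ℝ) ≤ (m:ℝ) := Nat.cast_nonneg m
  have hfs : ((m+1 : ℕ).factorial : ℝ) = ((m:ℝ)+1) * (m.factorial : ℝ) := by
    rw [Nat.factorial_succ]; push_cast; ring
  calc |((m : ℝ) * ((m : ℝ) + 1)) * a ν (m + 1)|
      = ((m:ℝ) * ((m:ℝ)+1)) * |a ν (m+1)| := by
        rw [abs_mul, abs_of_nonneg (by positivity)]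
    _ ≤ (((m:ℝ)+1) * ((m:ℝ)+1)) * ((Real.Gamma (ν + 1))⁻¹ / (((m+1:ℕ).factorial : ℝ) * ((m+1:ℕ).factorial : ℝ))) := by
        apply mul_le_mul (by nlinarith) (abs_a_le ν hν (m+1)) (abs_nonneg _) (by positivity)
    _ = Kc ν / ((m.factorial:ℝ) * (m.factorial:ℝ)) := by
        rw [hfs, Kc]; field_simp
    _ ≤ Kc ν / m.factorial := by
        apply div_le_div_of_nonneg_left (le_of_lt hK) (by positivity)
        nlinarith

lemma summable_G (ν : ℝ) (hν : 0 < ν) (t : ℝ) : Summable (fun m : ℕ => a ν m * t ^ m) :=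
  summable_coeff _ _ (bound0 ν hν) t

lemma summable_G1 (ν : ℝ) (hν : 0 < ν) (t : ℝ) :
    Summable (fun m : ℕ => (((m : ℝ) + 1) * a ν (m + 1)) * t ^ m) :=
  summable_coeff _ _ (bound1 ν hν) t

lemma summable_G2 (ν : ℝ) (hν : 0 < ν) (t : ℝ) :
    Summable (fun m : ℕ => ((((m : ℝ) + 1) * ((m : ℝ) + 2)) * a ν (m + 2)) * t ^ m) :=
  summable_coeff _ _ (bound2 ν hν) t

lemma summable_h (ν : ℝ) (hν : 0 < ν) (t : ℝ) :
    Summable (fun m : ℕ => (((m : ℝ) * ((m : ℝ) + 1)) * a ν (m + 1)) * t ^ m) :=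
  summable_coeff _ _ (boundh ν hν) t

lemma hasDerivAt_G (ν : ℝ) (hν : 0 < ν) (t : ℝ) : HasDerivAt (G ν) (G1 ν t) t :=
  hasDerivAt_series (a ν) (Kc ν) (bound0 ν hν) t

lemma hasDerivAt_G1 (ν : ℝ) (hν : 0 < ν) (t : ℝ) : HasDerivAt (G1 ν) (G2 ν t) t := by
  have h := hasDerivAt_series (fun m => ((m : ℝ) + 1) * a ν (m + 1)) (Kc ν) (bound1 ν hν) t
  exact h.congr_deriv (tsum_congr fun m => by push_cast; ring_nf)

lemma a_rec (ν : ℝ) (hν : 0 < ν) (m : ℕ) :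
    (((m : ℝ) + 1) * ((m : ℝ) + ν + 1)) * a ν (m + 1) = - a ν m := by
  have hΓpos : 0 < Real.Gamma ((m : ℝ) + ν + 1) := Real.Gamma_pos_of_pos (by positivity)
  have hrec : Real.Gamma (((m+1 : ℕ) : ℝ) + ν + 1)
      = ((m : ℝ) + ν + 1) * Real.Gamma ((m : ℝ) + ν + 1) := by
    have : ((m+1 : ℕ) : ℝ) + ν + 1 = ((m : ℝ) + ν + 1) + 1 := by push_cast; ring
    rw [this, Real.Gamma_add_one (ne_of_gt (by positivity))]
  have hfs : ((m+1 : ℕ).factorial : ℝ) = ((m:ℝ)+1) * (m.factorial : ℝ) := by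
    rw [Nat.factorial_succ]; push_cast; ring
  have hf : (m.factorial : ℝ) ≠ 0 := by positivity
  rw [a, a, hrec, hfs, pow_succ]
  field_simp

lemma ode (ν : ℝ) (hν : 0 < ν) (t : ℝ) :
    t * G2 ν t + ((ν + 1) * G1 ν t + G ν t) = 0 := by
  have e1 : t * G2 ν t = ∑' m : ℕ, (((m : ℝ) * ((m : ℝ) + 1)) * a ν (m + 1)) * t ^ m := by
    rw [G2, ← tsum_mul_left, (summable_h ν hν t).tsum_eq_zero_add]
    simp only [Nat.cast_zero, zero_mul, zero_add]
    exact tsum_congr fun m => by push_cast; ring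
  have e2 : (ν + 1) * G1 ν t = ∑' m : ℕ, ((ν+1) * ((((m : ℝ) + 1) * a ν (m + 1)) * t ^ m)) := by
    rw [G1, ← tsum_mul_left]
  rw [e1, e2, G,
    ← Summable.tsum_add ((summable_G1 ν hν t).mul_left (ν+1)) (summable_G ν hν t),
    ← Summable.tsum_add (summable_h ν hν t) (((summable_G1 ν hν t).mul_left (ν+1)).add (summable_G ν hν t))]
  have : ∀ m : ℕ, (((m : ℝ) * ((m : ℝ) + 1)) * a ν (m + 1)) * t ^ m
      + ((ν+1) * ((((m : ℝ) + 1) * a ν (m + 1)) * t ^ m) + a ν m * t ^ m) = 0 := by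
    intro m
    have h := a_rec ν hν m
    linear_combination t ^ m * h
  calc (∑' m : ℕ, ((((m : ℝ) * ((m : ℝ) + 1)) * a ν (m + 1)) * t ^ m
      + ((ν+1) * ((((m : ℝ) + 1) * a ν (m + 1)) * t ^ m) + a ν m * t ^ m)))
      = ∑' m : ℕ, (0:ℝ) := tsum_congr this
    _ = 0 := tsum_zero

lemma besselJ_eq (ν : ℝ) (x : ℝ) (hx : 0 < x) :
    besselJ ν x = (x / 2) ^ ν * G ν (x ^ 2 / 4) := by
  have hx2 : (0:ℝ) < x / 2 := by linarith
  rw [besselJ, G, ← tsum_mul_left]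
  apply tsum_congr
  intro m
  have e1 : (x / 2 : ℝ) ^ (2 * (m : ℝ) + ν) = (x/2) ^ (2*(m:ℝ)) * (x/2) ^ ν :=
    Real.rpow_add hx2 _ _
  have e2 : (x / 2 : ℝ) ^ (2 * (m : ℝ)) = (x ^ 2 / 4) ^ m := by
    have : (2 * (m : ℝ)) = ((2 * m : ℕ) : ℝ) := by push_cast; ring
    rw [this, Real.rpow_natCast, pow_mul]
    congr 1
    ring
  rw [e1, e2, a]
  ring

lemma hasDerivAt_besselJ (ν : ℝ) (hν : 0 < ν) (x : ℝ) (hx : 0 < x) :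
    HasDerivAt (besselJ ν) ((ν * (x/2) ^ (ν-1) * (1/2)) * G ν (x^2/4)
      + (x/2) ^ ν * (G1 ν (x^2/4) * (2*x/4))) x := by
  have hx2 : (0:ℝ) < x / 2 := by linarith
  have hin : HasDerivAt (fun y : ℝ => y / 2) (1/2 : ℝ) x := by
    simpa using (hasDerivAt_id x).div_const 2
  have hout : HasDerivAt (fun y : ℝ => y ^ ν) (ν * (x/2) ^ (ν-1)) (x/2) :=
    Real.hasDerivAt_rpow_const (Or.inl (ne_of_gt hx2))
  have h1 : HasDerivAt (fun y : ℝ => (y/2) ^ ν) (ν * (x/2) ^ (ν-1) * (1/2)) x := by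
    exact hout.comp x hin
  have h2in : HasDerivAt (fun y : ℝ => y ^ 2 / 4) (2*x/4) x := by
    have := (hasDerivAt_pow 2 x).div_const 4
    simpa using this
  have h2 : HasDerivAt (fun y : ℝ => G ν (y^2/4)) (G1 ν (x^2/4) * (2*x/4)) x :=
    HasDerivAt.comp (h₂ := G ν) x (hasDerivAt_G ν hν (x^2/4)) h2in
  have h := h1.mul h2
  have heq : besselJ ν =ᶠ[nhds x] fun y => (y/2) ^ ν * G ν (y^2/4) := by
    filter_upwards [isOpen_Ioi.mem_nhds (show x ∈ Ioi (0:ℝ) from hx)] with y hy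
    exact besselJ_eq ν y hy
  exact h.congr_of_eventuallyEq heq

lemma deriv_besselJ_at_zero (ν : ℝ) (hν : 0 < ν) (x : ℝ) (hx : 0 < x)
    (hz : besselJ ν x = 0) :
    G ν (x^2/4) = 0 ∧
    |deriv (besselJ ν) x| = (x/2) ^ ν * ((x/2) * |G1 ν (x^2/4)|) := by
  have hx2 : (0:ℝ) < x / 2 := by linarith
  have hrp : (0:ℝ) < (x/2) ^ ν := Real.rpow_pos_of_pos hx2 ν
  have hG0 : G ν (x^2/4) = 0 := by
    have h := besselJ_eq ν x hx
    rw [hz] at h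
    rcases mul_eq_zero.1 h.symm with h' | h'
    · exact absurd h' (ne_of_gt hrp)
    · exact h'
  refine ⟨hG0, ?_⟩
  have hd := (hasDerivAt_besselJ ν hν x hx).deriv
  rw [hd, hG0]
  rw [mul_zero, zero_add, abs_mul, abs_mul, abs_of_pos hrp]
  have : |2*x/4| = x/2 := by rw [abs_of_pos (by linarith)]; ring
  rw [this]
  ring

noncomputable def En (ν t : ℝ) : ℝ := (G ν t) ^ 2 + t * (G1 ν t) ^ 2

lemma hasDerivAt_En (ν : ℝ) (hν : 0 < ν) (t : ℝ) :
    HasDerivAt (En ν) (-(1 + 2*ν) * (G1 ν t) ^ 2) t := by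
  have hA : HasDerivAt (fun s => (G ν s) ^ 2) (2 * G ν t * G1 ν t) t := by
    simpa using (hasDerivAt_G ν hν t).fun_pow 2
  have hB : HasDerivAt (fun s => s * (G1 ν s) ^ 2)
      (1 * (G1 ν t) ^ 2 + t * (2 * G1 ν t * G2 ν t)) t := by
    have hb := (hasDerivAt_G1 ν hν t).pow 2
    have := (hasDerivAt_id t).fun_mul (by simpa using hb)
    simpa using this
  have h : HasDerivAt (En ν) _ t := hA.add hB
  have hode := ode ν hν t
  convert h using 1
  linear_combination (-2 * G1 ν t) * hode

lemma Hmono (ν : ℝ) (hν : 0 < ν) {s t : ℝ} (hs : 0 < s) (hst : s ≤ t) :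
    s ^ ((1:ℝ) + 2*ν) * En ν s ≤ t ^ ((1:ℝ) + 2*ν) * En ν t := by
  set Hf : ℝ → ℝ := fun y => y ^ ((1:ℝ) + 2*ν) * En ν y with hHf
  have hH : ∀ y : ℝ, 0 < y →
      HasDerivAt Hf ((1 + 2*ν) * (y ^ (2*ν) * (G ν y) ^ 2)) y := by
    intro y hy
    have h1 : HasDerivAt (fun z : ℝ => z ^ ((1:ℝ) + 2*ν))
        ((1 + 2*ν) * y ^ ((1:ℝ) + 2*ν - 1)) y :=
      Real.hasDerivAt_rpow_const (Or.inl (ne_of_gt hy))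
    have h2 := hasDerivAt_En ν hν y
    have h : HasDerivAt Hf _ y := h1.fun_mul h2
    have e1 : (1:ℝ) + 2*ν - 1 = 2*ν := by ring
    have e2 : y ^ ((1:ℝ) + 2*ν) = y * y ^ (2*ν) := by
      rw [Real.rpow_add hy, Real.rpow_one]
    convert h using 1
    rw [e1, e2, En]
    ring
  have hmono : MonotoneOn Hf (Icc s t) := by
    apply monotoneOn_of_deriv_nonneg (convex_Icc s t)
    · intro y hy
      exact (hH y (lt_of_lt_of_le hs hy.1)).continuousAt.continuousWithinAt
    · intro y hy
      rw [interior_Icc] at hy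
      exact (hH y (lt_trans hs hy.1)).differentiableAt.differentiableWithinAt
    · intro y hy
      rw [interior_Icc] at hy
      have hy0 : 0 < y := lt_trans hs hy.1
      rw [(hH y hy0).deriv]
      have := Real.rpow_nonneg (le_of_lt hy0) (2*ν)
      positivity
  exact hmono (left_mem_Icc.2 hst) (right_mem_Icc.2 hst) hst

set_option maxHeartbeats 1600000 in
lemma core (ν : ℝ) (hν : 0 < ν) (hν1 : ν < 1) (μ : ℝ) (hμ : 0 < μ) (T : ℝ)
    (hT : 64 + 2*μ + 1024*μ^2 ≤ T) (hGz : G ν T = 0) :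
    μ * |G1 ν T| / 2 ≤ |G ν (T - μ)| ∧ |G ν (T - μ)| ≤ 2 * (μ * |G1 ν T|) := by
  have hT64 : (64:ℝ) ≤ T := by nlinarith
  have hT2μ : 2*μ ≤ T := by nlinarith
  have hTμ2 : 1024*μ^2 ≤ T := by nlinarith
  have hT0 : (0:ℝ) < T := by linarith
  set sT := Real.sqrt T with hsT
  have hsT0 : 0 < sT := Real.sqrt_pos.2 hT0
  have hsT8 : (8:ℝ) ≤ sT := by
    rw [hsT, Real.le_sqrt (by norm_num) (le_of_lt hT0)]; nlinarith
  have hsT32 : 32*μ ≤ sT := by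
    rw [hsT, Real.le_sqrt (by positivity) (le_of_lt hT0)]; nlinarith
  have hsTsq : sT ^ 2 = T := Real.sq_sqrt (le_of_lt hT0)
  set g := |G1 ν T| with hg
  have hg0 : 0 ≤ g := abs_nonneg _
  have hEnT : En ν T = T * g ^ 2 := by
    rw [En, hGz, hg, sq_abs]; ring
  set p := (1:ℝ) + 2*ν with hp
  have hp3 : p ≤ 3 := by rw [hp]; linarith
  -- energy bound on the interval
  have hmemlb : ∀ s ∈ Icc (T - μ) T, T/2 ≤ s ∧ 0 < s := by
    intro s hs
    constructor
    · linarith [hs.1]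
    · linarith [hs.1]
  have keyE : ∀ s ∈ Icc (T - μ) T, En ν s ≤ 8 * (T * g ^ 2) := by
    intro s hs
    obtain ⟨hs2, hs0⟩ := hmemlb s hs
    have hmono := Hmono ν hν hs0 hs.2
    rw [hEnT] at hmono
    have hsp : (0:ℝ) < s ^ p := Real.rpow_pos_of_pos hs0 p
    have hTs : T / s ≤ 2 := by rw [div_le_iff₀ hs0]; linarith
    have hTs1 : (1:ℝ) ≤ T / s := by rw [le_div_iff₀ hs0]; linarith [hs.2]
    have hdiv : T ^ p / s ^ p = (T / s) ^ p := by
      rw [Real.div_rpow (le_of_lt hT0) (le_of_lt hs0)]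
    have h2p : (T / s) ^ p ≤ 8 := by
      calc (T / s) ^ p ≤ (2:ℝ) ^ p := by
            apply Real.rpow_le_rpow (by linarith) hTs (by rw [hp]; linarith)
        _ ≤ (2:ℝ) ^ (3:ℝ) := Real.rpow_le_rpow_of_exponent_le (by norm_num) hp3
        _ = 8 := by
            rw [show (3:ℝ) = ((3:ℕ):ℝ) by norm_num, Real.rpow_natCast]; norm_num
    calc En ν s = (s ^ p * En ν s) / s ^ p := by field_simp
      _ ≤ (T ^ p * (T * g ^ 2)) / s ^ p := (div_le_div_iff_of_pos_right hsp).2 hmono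
      _ = (T / s) ^ p * (T * g ^ 2) := by rw [← hdiv]; ring
      _ ≤ 8 * (T * g ^ 2) := by
          apply mul_le_mul_of_nonneg_right h2p (by positivity)
  have hGb : ∀ s ∈ Icc (T - μ) T, |G ν s| ≤ 3 * (sT * g) := by
    intro s hs
    obtain ⟨hs2, hs0⟩ := hmemlb s hs
    have h1 : (G ν s) ^ 2 ≤ 8 * (T * g ^ 2) := by
      have := keyE s hs
      rw [En] at this
      nlinarith [sq_nonneg (G1 ν s)]
    have h2 : (G ν s) ^ 2 ≤ (3 * (sT * g)) ^ 2 := by nlinarith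
    calc |G ν s| = Real.sqrt ((G ν s) ^ 2) := (Real.sqrt_sq_eq_abs _).symm
      _ ≤ Real.sqrt ((3 * (sT * g)) ^ 2) := Real.sqrt_le_sqrt h2
      _ = |3 * (sT * g)| := Real.sqrt_sq_eq_abs _
      _ = 3 * (sT * g) := abs_of_nonneg (by positivity)
  have hG1b : ∀ s ∈ Icc (T - μ) T, |G1 ν s| ≤ 4 * g := by
    intro s hs
    obtain ⟨hs2, hs0⟩ := hmemlb s hs
    have h1 : s * (G1 ν s) ^ 2 ≤ 8 * (T * g ^ 2) := by
      have := keyE s hs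
      rw [En] at this
      nlinarith [sq_nonneg (G ν s)]
    have h2 : (G1 ν s) ^ 2 ≤ (4 * g) ^ 2 := by nlinarith [sq_nonneg (G1 ν s)]
    calc |G1 ν s| = Real.sqrt ((G1 ν s) ^ 2) := (Real.sqrt_sq_eq_abs _).symm
      _ ≤ Real.sqrt ((4 * g) ^ 2) := Real.sqrt_le_sqrt h2
      _ = |4 * g| := Real.sqrt_sq_eq_abs _
      _ = 4 * g := abs_of_nonneg (by positivity)
  have hG2b : ∀ s ∈ Icc (T - μ) T, |G2 ν s| ≤ 8 * g / sT := by
    intro s hs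
    obtain ⟨hs2, hs0⟩ := hmemlb s hs
    have hode := ode ν hν s
    have he : s * G2 ν s = -((ν+1) * G1 ν s + G ν s) := by linarith
    have habs : |s * G2 ν s| ≤ 4 * (sT * g) := by
      rw [he, abs_neg]
      calc |(ν+1) * G1 ν s + G ν s| ≤ |(ν+1) * G1 ν s| + |G ν s| := abs_add_le _ _
        _ = (ν+1) * |G1 ν s| + |G ν s| := by rw [abs_mul, abs_of_pos (by linarith)]
        _ ≤ (ν+1) * (4 * g) + 3 * (sT * g) := by
            have := hG1b s hs
            have := hGb s hs
            have hν1' : ν + 1 ≤ 2 := by linarith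
            nlinarith [abs_nonneg (G1 ν s)]
        _ ≤ sT * g + 3 * (sT * g) := by nlinarith
        _ = 4 * (sT * g) := by ring
    rw [abs_mul, abs_of_pos hs0] at habs
    have h4 : |G2 ν s| ≤ 4 * (sT * g) / s := by
      rw [le_div_iff₀ hs0]; nlinarith [abs_nonneg (G2 ν s), habs]
    calc |G2 ν s| ≤ 4 * (sT * g) / s := h4
      _ ≤ 4 * (sT * g) / (T/2) := by
          apply div_le_div_of_nonneg_left (by positivity) (by linarith) hs2
      _ = 8 * g / sT := by
          rw [eq_div_iff (ne_of_gt hsT0)]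
          field_simp
          nlinarith [hsTsq]
  -- MVT for G1
  have hMVT1 : ∀ s ∈ Icc (T - μ) T, |G1 ν s - G1 ν T| ≤ 8 * g / sT * μ := by
    intro s hs
    have := (convex_Icc (T - μ) T).norm_image_sub_le_of_norm_hasDerivWithin_le
      (f := G1 ν) (f' := G2 ν)
      (fun x hx => (hasDerivAt_G1 ν hν x).hasDerivWithinAt)
      (fun x hx => by rw [Real.norm_eq_abs]; exact hG2b x hx)
      (right_mem_Icc.2 (by linarith)) hs
    rw [Real.norm_eq_abs, Real.norm_eq_abs] at this
    calc |G1 ν s - G1 ν T| ≤ 8 * g / sT * |s - T| := this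
      _ ≤ 8 * g / sT * μ := by
          apply mul_le_mul_of_nonneg_left ?_ (by positivity)
          rw [abs_le]
          constructor <;> [linarith [hs.1]; linarith [hs.2]]
  -- MVT for ψ
  have hψ : |G ν (T - μ) + μ * G1 ν T| ≤ 8 * g / sT * μ * μ := by
    set ψ : ℝ → ℝ := fun s => G ν s - (s - T) * G1 ν T with hψdef
    have hd : ∀ x ∈ Icc (T - μ) T, HasDerivWithinAt ψ (G1 ν x - G1 ν T) (Icc (T - μ) T) x := by
      intro x hx
      have h1 := hasDerivAt_G ν hν x
      have h2 : HasDerivAt (fun s : ℝ => (s - T) * G1 ν T) (G1 ν T) x := by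
        simpa using ((hasDerivAt_id x).sub_const T).mul_const (G1 ν T)
      exact (h1.sub h2).hasDerivWithinAt
    have := (convex_Icc (T - μ) T).norm_image_sub_le_of_norm_hasDerivWithin_le
      hd (fun x hx => by rw [Real.norm_eq_abs]; exact hMVT1 x hx)
      (right_mem_Icc.2 (by linarith)) (left_mem_Icc.2 (by linarith))
    have eψT : ψ T = 0 := by simp [hψdef, hGz]
    have eψs : ψ (T - μ) = G ν (T - μ) + μ * G1 ν T := by simp [hψdef]
    rw [eψT, eψs, sub_zero, Real.norm_eq_abs] at this
    calc |G ν (T - μ) + μ * G1 ν T| ≤ 8 * g / sT * μ * ‖T - μ - T‖ := this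
      _ = 8 * g / sT * μ * μ := by
          rw [Real.norm_eq_abs, show T - μ - T = -μ by ring, abs_neg, abs_of_pos hμ]
  have hsmall : 8 * g / sT * μ * μ ≤ μ * g / 4 := by
    rw [div_mul_eq_mul_div, div_mul_eq_mul_div, div_le_iff₀ hsT0]
    nlinarith [mul_nonneg (mul_nonneg hμ.le hg0) (sub_nonneg.2 hsT32)]
  have habs1 : |μ * G1 ν T| = μ * g := by rw [abs_mul, abs_of_pos hμ]
  have hμg : 0 ≤ μ * g := mul_nonneg hμ.le hg0
  constructor
  · have h1 : |G ν (T - μ)| ≥ |μ * G1 ν T| - |G ν (T - μ) + μ * G1 ν T| := by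
      have := abs_sub_abs_le_abs_sub (μ * G1 ν T) (-(G ν (T - μ)))
      rw [abs_neg] at this
      have e : μ * G1 ν T - -(G ν (T - μ)) = G ν (T - μ) + μ * G1 ν T := by ring
      rw [e] at this
      linarith
    rw [habs1] at h1
    have := le_trans hψ hsmall
    linarith
  · have h2 : |G ν (T - μ)| ≤ |G ν (T - μ) + μ * G1 ν T| + |μ * G1 ν T| := by
      have := abs_add_le (G ν (T - μ) + μ * G1 ν T) (-(μ * G1 ν T))
      simpa using this
    rw [habs1] at h2
    have := le_trans hψ hsmall
    linarith

end Stmt11Aux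

namespace Stmt11Aux

lemma arith_j (nR jn ν C : ℝ) (hν0 : 0 < ν) (hν1 : ν < 1) (hC0 : 0 ≤ C)
    (hn1 : 1 ≤ nR) (hnC : C + 2 ≤ nR)
    (habs : |jn - Real.pi * (nR + ν / 2 - 1 / 4)| ≤ C / nR) :
    nR ≤ jn ∧ jn ≤ 5 * nR := by
  have hπ3 : (3:ℝ) < Real.pi := Real.pi_gt_three
  have hπ4 : Real.pi ≤ 4 := Real.pi_le_four
  have hn0 : 0 < nR := by linarith
  have hCn : C / nR ≤ C := div_le_self hC0 hn1
  rw [abs_le] at habs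
  constructor
  · nlinarith [habs.1]
  · nlinarith [habs.2]

lemma arith_T (nR jn K μ : ℝ) (hμ : 0 < μ) (hK : K = 4 * (64 + 2*μ + 1024*μ^2))
    (hn1 : 1 ≤ nR) (hnK : K ≤ nR) (hjn : nR ≤ jn) :
    64 + 2*μ + 1024*μ^2 ≤ jn^2/4 := by nlinarith

lemma arith_mu (μ T : ℝ) (hμ : 0 < μ) (h : 64 + 2*μ + 1024*μ^2 ≤ T) : 8*μ ≤ T := by
  nlinarith [sq_nonneg (32*μ - 1)]

lemma arith_ev (κ μ Jsq : ℝ) (hκ0 : 0 < κ) (h : 4*μ < Jsq) :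
    4 * κ^2 * μ < κ^2 * Jsq := by nlinarith [mul_pos (pow_pos hκ0 2) (sub_pos.2 h)]

lemma arith_xge (jn μ : ℝ) (hμ : 0 < μ) (h : 32*μ ≤ jn^2) : (jn/2)^2 ≤ jn^2 - 4*μ := by
  nlinarith

end Stmt11Aux

open Stmt11Aux in
set_option maxHeartbeats 1600000 in
/-- There exist `C₁, C₂ > 0` and `N ≥ 1` such that for all `n ≥ N` (in particular `λ_n > λ`),
`C₁ n^(-3/2) ≤ |J_ν(√(λ_n - λ)/κ)| ≤ C₂ n^(-3/2)`. -/
theorem stmt_11 (α ν κ : ℝ) (hα : α ∈ Set.Ioo (0:ℝ) 1)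
    (hν : ν = (1 - α) / (2 - α)) (hκ : κ = (2 - α) / 2)
    (j : ℕ → ℝ)
    (hjpos : ∀ n, 1 ≤ n → 0 < j n)
    (hjmono : ∀ m n, 1 ≤ m → m < n → j m < j n)
    (hjzero : ∀ n, 1 ≤ n → besselJ ν (j n) = 0)
    (hjtop : Filter.Tendsto j Filter.atTop Filter.atTop)
    (hasym : ∃ C : ℝ, ∀ n : ℕ, 1 ≤ n →
      |j n - Real.pi * ((n : ℝ) + ν / 2 - 1 / 4)| ≤ C / (n : ℝ))
    (hder : ∃ c₁ > (0:ℝ), ∃ c₂ > (0:ℝ), ∀ n, 1 ≤ n →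
      c₁ / Real.sqrt (j n) ≤ |deriv (besselJ ν) (j n)| ∧
      |deriv (besselJ ν) (j n)| ≤ c₂ / Real.sqrt (j n))
    (ev : ℕ → ℝ) (hev : ∀ n, ev n = (κ * j n) ^ 2)
    (lam : ℝ) (hlam : 0 < lam)
    (hnr1 : ∀ n, 1 ≤ n → lam ≠ ev n)
    (hnr2 : ∀ n k, 1 ≤ n → 1 ≤ k → lam - ev n ≠ ev k) :
    ∃ C₁ > (0:ℝ), ∃ C₂ > (0:ℝ), ∃ N : ℕ, 1 ≤ N ∧ ∀ n, N ≤ n →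
      lam < ev n ∧
      C₁ / (n : ℝ) ^ ((3:ℝ) / 2) ≤ |besselJ ν (Real.sqrt (ev n - lam) / κ)| ∧
      |besselJ ν (Real.sqrt (ev n - lam) / κ)| ≤ C₂ / (n : ℝ) ^ ((3:ℝ) / 2) := by
  obtain ⟨hα0, hα1⟩ := hα
  have hν0 : 0 < ν := by rw [hν]; apply div_pos <;> linarith
  have hν1 : ν < 1 := by
    rw [hν, div_lt_one (by linarith)]; linarith
  have hκ0 : 0 < κ := by rw [hκ]; linarith
  set μ : ℝ := lam / (4 * κ ^ 2) with hμdef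
  have hμ : 0 < μ := by positivity
  obtain ⟨C, hC⟩ := hasym
  have hC0 : 0 ≤ C := by
    have h := hC 1 le_rfl
    have h0 := abs_nonneg (j 1 - Real.pi * ((1 : ℝ) + ν / 2 - 1 / 4))
    simp only [Nat.cast_one, div_one] at h
    linarith
  obtain ⟨c₁, hc₁, c₂, hc₂, hd⟩ := hder
  set K : ℝ := 4 * (64 + 2 * μ + 1024 * μ ^ 2) with hKdef
  set N : ℕ := ⌈C⌉₊ + ⌈K⌉₊ + 2 with hNdef
  have hs5 : (0:ℝ) < Real.sqrt 5 := Real.sqrt_pos.2 (by norm_num)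
  refine ⟨μ * c₁ / (10 * Real.sqrt 5), by positivity, 4 * μ * c₂, by positivity, N, by omega, ?_⟩
  intro n hn
  have hn1 : 1 ≤ n := by omega
  have hn1R : (1:ℝ) ≤ (n:ℝ) := by exact_mod_cast hn1
  have hn0R : (0:ℝ) < (n:ℝ) := by linarith
  have hnC : C + 2 ≤ (n:ℝ) := by
    have h1 : C ≤ (⌈C⌉₊ : ℝ) := Nat.le_ceil C
    have h2 : ((⌈C⌉₊ + 2 : ℕ) : ℝ) ≤ (n:ℝ) := by
      have : (⌈C⌉₊ + 2 : ℕ) ≤ n := by omega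
      exact_mod_cast this
    push_cast at h2
    linarith
  have hnK : K ≤ (n:ℝ) := by
    have h1 : K ≤ (⌈K⌉₊ : ℝ) := Nat.le_ceil K
    have h2 : ((⌈K⌉₊ : ℕ) : ℝ) ≤ (n:ℝ) := by
      have : (⌈K⌉₊ : ℕ) ≤ n := by omega
      exact_mod_cast this
    linarith
  obtain ⟨hjlow, hjup⟩ := arith_j (n:ℝ) (j n) ν C hν0 hν1 hC0 hn1R hnC (hC n hn1)
  have hj0 : 0 < j n := by linarith
  have hTbig : 64 + 2 * μ + 1024 * μ ^ 2 ≤ (j n) ^ 2 / 4 :=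
    arith_T (n:ℝ) (j n) K μ hμ hKdef hn1R hnK hjlow
  have hμj : 8 * μ ≤ (j n) ^ 2 / 4 := arith_mu μ _ hμ hTbig
  have hj32 : 32 * μ ≤ (j n) ^ 2 := by linarith
  have hj4μ : 0 < (j n) ^ 2 - 4 * μ := by linarith
  have hevn : ev n = κ ^ 2 * (j n) ^ 2 := by rw [hev]; ring
  have hlam4 : lam = 4 * κ ^ 2 * μ := by rw [hμdef]; field_simp
  have hevlam : ev n - lam = κ ^ 2 * ((j n) ^ 2 - 4 * μ) := by
    rw [hevn, hlam4]; ring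
  have hlamlt : lam < ev n := by
    rw [hevn, hlam4]
    exact arith_ev κ μ _ hκ0 (by linarith)
  refine ⟨hlamlt, ?_⟩
  -- identify the evaluation point
  set x : ℝ := Real.sqrt (ev n - lam) / κ with hxdef
  have hxeq : x = Real.sqrt ((j n) ^ 2 - 4 * μ) := by
    rw [hxdef, hevlam, Real.sqrt_mul (by positivity), Real.sqrt_sq hκ0.le]
    field_simp
  have hx0 : 0 < x := by rw [hxeq]; exact Real.sqrt_pos.2 hj4μ
  have hxsq : x ^ 2 = (j n) ^ 2 - 4 * μ := by rw [hxeq]; exact Real.sq_sqrt hj4μ.le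
  have hxle : x ≤ j n := by
    rw [hxeq]
    calc Real.sqrt ((j n) ^ 2 - 4 * μ) ≤ Real.sqrt ((j n) ^ 2) :=
          Real.sqrt_le_sqrt (by linarith)
      _ = |j n| := Real.sqrt_sq_eq_abs _
      _ = j n := abs_of_pos hj0
  have hxge : j n / 2 ≤ x := by
    rw [hxeq, Real.le_sqrt (by positivity) (by linarith)]
    exact arith_xge (j n) μ hμ hj32
  have hsn : x ^ 2 / 4 = (j n) ^ 2 / 4 - μ := by rw [hxsq]; ring
  -- zero of G and derivative identity
  have hz := hjzero n hn1
  obtain ⟨hG0, hder_eq⟩ := deriv_besselJ_at_zero ν hν0 (j n) hj0 hz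
  obtain ⟨hlow, hup⟩ := core ν hν0 hν1 μ hμ ((j n) ^ 2 / 4) hTbig hG0
  set gq : ℝ := |G1 ν ((j n) ^ 2 / 4)| with hgq
  have hgq0 : 0 ≤ gq := abs_nonneg _
  have hBeq : |besselJ ν x| = (x / 2) ^ ν * |G ν ((j n) ^ 2 / 4 - μ)| := by
    rw [besselJ_eq ν x hx0, hsn, abs_mul,
      abs_of_pos (Real.rpow_pos_of_pos (by linarith) ν)]
  set A : ℝ := (j n / 2) ^ ν with hA
  set B : ℝ := (x / 2) ^ ν with hB
  have hApos : 0 < A := Real.rpow_pos_of_pos (by linarith) ν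
  have hBpos : 0 < B := Real.rpow_pos_of_pos (by linarith) ν
  have hBA : B ≤ A := by
    rw [hA, hB]
    exact Real.rpow_le_rpow (by linarith) (by linarith) hν0.le
  have hAB : A / 2 ≤ B := by
    have h1 : (j n / 2 * (1/2) : ℝ) ^ ν = A * (1/2 : ℝ) ^ ν := by
      rw [hA, Real.mul_rpow (by linarith) (by norm_num)]
    have h2 : (1/2 : ℝ) ≤ (1/2 : ℝ) ^ ν := by
      calc (1/2 : ℝ) = (1/2 : ℝ) ^ (1:ℝ) := (Real.rpow_one _).symm
        _ ≤ (1/2 : ℝ) ^ ν := Real.rpow_le_rpow_of_exponent_ge (by norm_num) (by norm_num) hν1.le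
    have h3 : (j n / 2 * (1/2) : ℝ) ^ ν ≤ B := by
      rw [hB]
      exact Real.rpow_le_rpow (by positivity) (by linarith) hν0.le
    rw [h1] at h3
    calc A / 2 = A * (1/2 : ℝ) := by ring
      _ ≤ A * (1/2 : ℝ) ^ ν := mul_le_mul_of_nonneg_left h2 hApos.le
      _ ≤ B := h3
  have hder_eq' : |deriv (besselJ ν) (j n)| = A * (j n / 2 * gq) := by
    rw [hder_eq]
  obtain ⟨hd1, hd2⟩ := hd n hn1
  have hsj0 : 0 < Real.sqrt (j n) := Real.sqrt_pos.2 hj0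
  have hsn0 : 0 < Real.sqrt (n:ℝ) := Real.sqrt_pos.2 hn0R
  have hsjn : Real.sqrt (n:ℝ) ≤ Real.sqrt (j n) := Real.sqrt_le_sqrt hjlow
  have hsj5 : Real.sqrt (j n) ≤ Real.sqrt 5 * Real.sqrt (n:ℝ) := by
    rw [← Real.sqrt_mul (by norm_num)]
    exact Real.sqrt_le_sqrt hjup
  have hrpow32 : ((n:ℝ)) ^ ((3:ℝ)/2) = (n:ℝ) * Real.sqrt (n:ℝ) := by
    rw [show (3:ℝ)/2 = 1 + 1/2 by norm_num, Real.rpow_add hn0R, Real.rpow_one,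
      ← Real.sqrt_eq_rpow]
  have hAg : A * gq = 2 * |deriv (besselJ ν) (j n)| / j n := by
    rw [hder_eq']
    field_simp
  have hDd : |deriv (besselJ ν) (j n)| / j n ≤ c₂ / (Real.sqrt (n:ℝ) * (n:ℝ)) := by
    calc |deriv (besselJ ν) (j n)| / j n ≤ (c₂ / Real.sqrt (j n)) / j n :=
          (div_le_div_iff_of_pos_right hj0).2 hd2
      _ = c₂ / (Real.sqrt (j n) * j n) := by rw [div_div]
      _ ≤ c₂ / (Real.sqrt (n:ℝ) * (n:ℝ)) := by
          apply div_le_div_of_nonneg_left hc₂.le (by positivity)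
          exact mul_le_mul hsjn hjlow (by positivity) hsj0.le
  have hDd1 : c₁ / (Real.sqrt 5 * Real.sqrt (n:ℝ) * (5 * (n:ℝ))) ≤
      |deriv (besselJ ν) (j n)| / j n := by
    calc c₁ / (Real.sqrt 5 * Real.sqrt (n:ℝ) * (5 * (n:ℝ)))
        ≤ c₁ / (Real.sqrt (j n) * j n) := by
          apply div_le_div_of_nonneg_left hc₁.le (by positivity)
          exact mul_le_mul hsj5 hjup hj0.le (by positivity)
      _ = (c₁ / Real.sqrt (j n)) / j n := by rw [div_div]
      _ ≤ |deriv (besselJ ν) (j n)| / j n := (div_le_div_iff_of_pos_right hj0).2 hd1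
  constructor
  · -- lower bound
    have step1 : (μ / 4) * (A * gq) ≤ |besselJ ν x| := by
      rw [hBeq]
      calc (μ / 4) * (A * gq) = (A / 2) * (μ * gq / 2) := by ring
        _ ≤ B * (μ * gq / 2) := mul_le_mul_of_nonneg_right hAB (by positivity)
        _ ≤ B * |G ν ((j n) ^ 2 / 4 - μ)| := mul_le_mul_of_nonneg_left hlow hBpos.le
    calc μ * c₁ / (10 * Real.sqrt 5) / (n:ℝ) ^ ((3:ℝ)/2)
        = (μ / 2) * (c₁ / (Real.sqrt 5 * Real.sqrt (n:ℝ) * (5 * (n:ℝ)))) := by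
          rw [hrpow32]
          field_simp
          ring
      _ ≤ (μ / 2) * (|deriv (besselJ ν) (j n)| / j n) :=
          mul_le_mul_of_nonneg_left hDd1 (by positivity)
      _ = (μ / 4) * (A * gq) := by rw [hAg]; ring
      _ ≤ |besselJ ν x| := step1
  · -- upper bound
    calc |besselJ ν x| = B * |G ν ((j n) ^ 2 / 4 - μ)| := hBeq
      _ ≤ B * (2 * (μ * gq)) := mul_le_mul_of_nonneg_left hup hBpos.le
      _ ≤ A * (2 * (μ * gq)) := mul_le_mul_of_nonneg_right hBA (by positivity)
      _ = (2 * μ) * (A * gq) := by ring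
      _ = (4 * μ) * (|deriv (besselJ ν) (j n)| / j n) := by rw [hAg]; ring
      _ ≤ (4 * μ) * (c₂ / (Real.sqrt (n:ℝ) * (n:ℝ))) :=
          mul_le_mul_of_nonneg_left hDd (by positivity)
      _ = 4 * μ * c₂ / (n:ℝ) ^ ((3:ℝ)/2) := by
          rw [hrpow32]
          field_simp
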